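/- For every positive integer M, every ε ∈ {0, 1/2}, all real j, k, all integers a, b, every τ in the upper half-plane, and all z₁, z₂ ∈ ℂ such that the theta values in the denominators are nonzero: Ψ^{[M;ε]}_{j+aM, k+bM}(τ, z₁, z₂, 0) = e^{2πi(a−b)ε} · Ψ^{[M;ε]}_{j,k}(τ, z₁, z₂, 0). -/

import Mathlib

open Complex

/-- Jacobi theta function with characteristics `a b ∈ {0,1}` (allowing real characteristics):
`ϑ_{ab}(τ, z) = Σ_{n ∈ ℤ} exp(πi(n + a/2)²τ + 2πi(n + a/2)(z + b/2))`. -/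
noncomputable def jTheta (a b : ℝ) (τ z : ℂ) : ℂ :=
  ∑' n : ℤ, Complex.exp ((Real.pi : ℂ) * I * ((n : ℂ) + (a : ℂ) / 2) ^ 2 * τ +
    2 * (Real.pi : ℂ) * I * ((n : ℂ) + (a : ℂ) / 2) * (z + (b : ℂ) / 2))

/-- Dedekind eta function `η(τ) = e^{πiτ/12} Π_{n=1}^∞ (1 - q^n)`, `q = e^{2πiτ}`. -/
noncomputable def dedekindEta (τ : ℂ) : ℂ :=
  Complex.exp ((Real.pi : ℂ) * I * τ / 12) *
    ∏' n : ℕ, (1 - Complex.exp (2 * (Real.pi : ℂ) * I * τ) ^ (n + 1))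

/-- The function `Ψ^{[M;ε]}_{j,k}(τ, z₁, z₂, t)` (the paper's `Ψ^{[M,1,0;ε]}_{j,k;ε'}` in closed
form for `m = 1`):
`-i e^{-2πit/M} q^{jk/M} e^{(2πi/M)(k z₁ + j z₂)} η(Mτ)³ ϑ₁₁(Mτ, z₁+z₂+(j+k)τ) /
  (ϑ₁₁(Mτ, z₁+jτ+ε) ϑ₁₁(Mτ, z₂+kτ-ε))` where `q = e^{2πiτ}`. -/
noncomputable def Psi (M : ℕ) (ε j k : ℝ) (τ z₁ z₂ t : ℂ) : ℂ :=
  -I * Complex.exp (-(2 * (Real.pi : ℂ) * I * t) / (M : ℂ)) *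
    Complex.exp (2 * (Real.pi : ℂ) * I * τ * ((j : ℂ) * (k : ℂ) / (M : ℂ))) *
    Complex.exp (2 * (Real.pi : ℂ) * I / (M : ℂ) * ((k : ℂ) * z₁ + (j : ℂ) * z₂)) *
    (dedekindEta ((M : ℂ) * τ)) ^ 3 *
    jTheta 1 1 ((M : ℂ) * τ) (z₁ + z₂ + ((j : ℂ) + (k : ℂ)) * τ) /
    (jTheta 1 1 ((M : ℂ) * τ) (z₁ + (j : ℂ) * τ + (ε : ℂ)) *
     jTheta 1 1 ((M : ℂ) * τ) (z₂ + (k : ℂ) * τ - (ε : ℂ)))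

lemma jTheta_shift (T z : ℂ) (a : ℤ) :
    jTheta 1 1 T (z + (a:ℂ) * T) =
      Complex.exp (-(Real.pi:ℂ) * I * ((a:ℂ)^2 * T + 2*(a:ℂ)*z + (a:ℂ))) * jTheta 1 1 T z := by
  unfold jTheta
  rw [← tsum_mul_left, ← (Equiv.subRight a).tsum_eq]
  congr 1; funext n
  simp only [Equiv.subRight_apply, ← Complex.exp_add]
  congr 1
  push_cast
  ring

/-- Quasi-periodicity of `Ψ^{[M;ε]}_{j,k}` in the indices (Lemma 2.2(1) of the paper). -/
theorem Psi_index_shift (M : ℕ) (hM : 0 < M) (ε : ℝ) (hε : ε = 0 ∨ ε = 1/2)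
    (j k : ℝ) (a b : ℤ) (τ : ℂ) (hτ : 0 < τ.im) (z₁ z₂ : ℂ)
    (h1 : jTheta 1 1 ((M : ℂ) * τ) (z₁ + ((j + a * M : ℝ) : ℂ) * τ + (ε : ℂ)) ≠ 0)
    (h2 : jTheta 1 1 ((M : ℂ) * τ) (z₂ + ((k + b * M : ℝ) : ℂ) * τ - (ε : ℂ)) ≠ 0)
    (h3 : jTheta 1 1 ((M : ℂ) * τ) (z₁ + (j : ℂ) * τ + (ε : ℂ)) ≠ 0)
    (h4 : jTheta 1 1 ((M : ℂ) * τ) (z₂ + (k : ℂ) * τ - (ε : ℂ)) ≠ 0) :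
    Psi M ε (j + a * M) (k + b * M) τ z₁ z₂ 0 =
      Complex.exp (2 * (Real.pi : ℂ) * I * ((a : ℂ) - (b : ℂ)) * (ε : ℂ)) *
        Psi M ε j k τ z₁ z₂ 0 := by
  have hMC : (M : ℂ) ≠ 0 := Nat.cast_ne_zero.mpr hM.ne'
  unfold Psi
  have e1 : z₁ + ((j + a * M : ℝ) : ℂ) * τ + (ε : ℂ)
      = (z₁ + (j : ℂ) * τ + (ε : ℂ)) + ((a : ℤ) : ℂ) * ((M : ℂ) * τ) := by push_cast; ring
  have e2 : z₂ + ((k + b * M : ℝ) : ℂ) * τ - (ε : ℂ)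
      = (z₂ + (k : ℂ) * τ - (ε : ℂ)) + ((b : ℤ) : ℂ) * ((M : ℂ) * τ) := by push_cast; ring
  have e3 : z₁ + z₂ + (((j + a * M : ℝ) : ℂ) + ((k + b * M : ℝ) : ℂ)) * τ
      = (z₁ + z₂ + ((j : ℂ) + (k : ℂ)) * τ) + (((a + b : ℤ)) : ℂ) * ((M : ℂ) * τ) := by
    push_cast; ring
  rw [e1, e2, e3, jTheta_shift, jTheta_shift, jTheta_shift]
  field_simp [h3, h4, Complex.exp_ne_zero]
  have key : cexp (2 * (Real.pi:ℂ) * I * τ * (((j:ℂ) + (a:ℂ) * (M:ℂ)) * ((k:ℂ) + (b:ℂ) * (M:ℂ))) / (M:ℂ)) *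
      cexp (2 * (Real.pi:ℂ) * I * (((k:ℂ) + (b:ℂ) * (M:ℂ)) * z₁ + ((j:ℂ) + (a:ℂ) * (M:ℂ)) * z₂) / (M:ℂ)) *
      cexp (-((Real.pi:ℂ) * I * (((a:ℂ) + (b:ℂ)) ^ 2 * ((M:ℂ) * τ) + 2 * ((a:ℂ) + (b:ℂ)) * (z₁ + z₂ + ((j:ℂ) + (k:ℂ)) * τ) + ((a:ℂ) + (b:ℂ))))) =
      cexp (2 * (Real.pi:ℂ) * I * ((a:ℂ) - (b:ℂ)) * (ε:ℂ)) *
      cexp (2 * (Real.pi:ℂ) * I * τ * ((j:ℂ) * (k:ℂ)) / (M:ℂ)) *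
      cexp (2 * (Real.pi:ℂ) * I * ((k:ℂ) * z₁ + (j:ℂ) * z₂) / (M:ℂ)) *
      cexp (-((Real.pi:ℂ) * I * ((a:ℂ) ^ 2 * ((M:ℂ) * τ) + 2 * (a:ℂ) * (z₁ + (j:ℂ) * τ + (ε:ℂ)) + (a:ℂ)))) *
      cexp (-((Real.pi:ℂ) * I * ((b:ℂ) ^ 2 * ((M:ℂ) * τ) + 2 * (b:ℂ) * (z₂ + (k:ℂ) * τ - (ε:ℂ)) + (b:ℂ)))) := by
    simp only [← Complex.exp_add]
    congr 1
    field_simp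
    ring
  push_cast
  linear_combination (norm := ring_nf) (-(dedekindEta ((M:ℂ) * τ) ^ 3 *
    jTheta 1 1 ((M:ℂ) * τ) (z₁ + z₂ + ((j:ℂ) + (k:ℂ)) * τ) *
    (jTheta 1 1 ((M:ℂ) * τ) (z₁ + (j:ℂ) * τ + (ε:ℂ)))⁻¹ *
    (jTheta 1 1 ((M:ℂ) * τ) (z₂ + (k:ℂ) * τ - (ε:ℂ)))⁻¹)) * key
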